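/- Suppose j ∈ A_i implies q_i + p_j = α_i v_{ij} for nonnegative duals (q,p) satisfying q_i + p_j ≥ α_i v_{ij} for all i, j, where α_i > 0 and |A_i| = k for all i. Then for any agents i, i' and any good j* ∈ argmax_{j ∈ A_{i'}} p_j, if p(A_i) ≥ p(A_{i'}) − p_{j*}, then v_i(A_i) ≥ v_i(A_{i'} \ {j*}). -/

import Mathlib

open Finset

/-- Complementary-slackness duals turn a price-EF1 comparison into a value
comparison: if `p(A_i) ≥ p(A_{i'}) − p_{j*}` for a maximum-price good `j*` of
`A_{i'}`, then `v_i(A_i) ≥ v_i(A_{i'} \ {j*})`. -/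
theorem stmt3 (n m k : ℕ)
    (v : Fin n → Fin m → ℝ) (hv : ∀ i j, 0 ≤ v i j)
    (α : Fin n → ℝ) (hα : ∀ i, 0 < α i)
    (A : Fin n → Finset (Fin m)) (hcard : ∀ i, (A i).card = k)
    (q : Fin n → ℝ) (p : Fin m → ℝ) (hq : ∀ i, 0 ≤ q i)
    (hfeas : ∀ i j, α i * v i j ≤ q i + p j)
    (hcs : ∀ (i : Fin n), ∀ j ∈ A i, q i + p j = α i * v i j)
    (i i' : Fin n) (jstar : Fin m) (hjstar : jstar ∈ A i')
    (hmax : ∀ j ∈ A i', p j ≤ p jstar)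
    (hp : (∑ j ∈ A i', p j) - p jstar ≤ ∑ j ∈ A i, p j) :
    ∑ j ∈ (A i').erase jstar, v i j ≤ ∑ j ∈ A i, v i j := by
  rw [← mul_le_mul_iff_right₀ (hα i), Finset.mul_sum, Finset.mul_sum]
  have h1 : ∑ j ∈ (A i').erase jstar, α i * v i j ≤
      ∑ j ∈ (A i').erase jstar, (q i + p j) :=
    Finset.sum_le_sum fun j _ => hfeas i j
  have h2 : ∑ j ∈ A i, (q i + p j) = ∑ j ∈ A i, α i * v i j :=
    Finset.sum_congr rfl fun j hj => hcs i j hj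
  refine h1.trans (le_of_le_of_eq ?_ h2)
  rw [Finset.sum_add_distrib, Finset.sum_add_distrib, Finset.sum_const,
    Finset.sum_const, Finset.card_erase_of_mem hjstar, hcard, hcard]
  have herase : ∑ j ∈ (A i').erase jstar, p j = (∑ j ∈ A i', p j) - p jstar := by
    rw [Finset.sum_erase_eq_sub hjstar]
  rw [herase]
  have hk : (k - 1 : ℕ) • q i ≤ k • q i := by
    apply nsmul_le_nsmul_left (hq i)
    omega
  linarith [hp]
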